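/- Let d ≥ 1 be an integer and set T = 10d. Let S be a real polynomial in the variables W_1, …, W_T of total degree at most d−1, and let Q = (1/√T)·(W_1 + ⋯ + W_T)·S. Then the number of indices j ∈ {1, …, T} such that ‖Q_{j,1}‖² ≥ (1/T)·(20dT)^{-4^d}·‖Q‖² is at least T/2. -/

import Mathlib

open MvPolynomial Finset


/-- Squared ℓ2 norm (`‖·‖²`) of the coefficient vector of a multivariate polynomial
in the standard monomial basis. -/
noncomputable def coeffNormSq {σ : Type*} (P : MvPolynomial σ ℝ) : ℝ :=
  ∑ m ∈ P.support, (P.coeff m) ^ 2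

/-- The `W_j`-linear part of a polynomial: collect all monomials in which the
variable `j` appears with exponent exactly `1` and delete the factor `W_j`. -/
noncomputable def linearPart {T : ℕ} (Q : MvPolynomial (Fin T) ℝ) (j : Fin T) :
    MvPolynomial (Fin T) ℝ :=
  ∑ m ∈ Q.support.filter (fun m => m j = 1),
    monomial (m - Finsupp.single j 1) (Q.coeff m)

lemma coeffNormSq_eq_sum_subset' {σ : Type*} (P : MvPolynomial σ ℝ) {s : Finset (σ →₀ ℕ)}
    (hs : P.support ⊆ s) : coeffNormSq P = ∑ m ∈ s, (P.coeff m) ^ 2 := by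
  classical
  unfold coeffNormSq
  refine (Finset.sum_subset hs ?_)
  intro x _ hx
  have : P.coeff x = 0 := by simpa [MvPolynomial.mem_support_iff] using hx
  simp [this]

lemma sq_coeff_le_coeffNormSq {σ : Type*} (P : MvPolynomial σ ℝ) (n : σ →₀ ℕ) :
    (P.coeff n) ^ 2 ≤ coeffNormSq P := by
  classical
  by_cases h : n ∈ P.support
  · unfold coeffNormSq
    exact Finset.single_le_sum (f := fun m => (P.coeff m)^2) (fun m _ => sq_nonneg _) h
  · have : P.coeff n = 0 := by simpa [MvPolynomial.mem_support_iff] using h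
    rw [this]
    unfold coeffNormSq
    simpa using Finset.sum_nonneg (fun m _ => sq_nonneg (P.coeff m))

lemma coeffNormSq_nonneg {σ : Type*} (P : MvPolynomial σ ℝ) : 0 ≤ coeffNormSq P :=
  Finset.sum_nonneg (fun m _ => sq_nonneg _)

lemma coeffNormSq_C_mul {σ : Type*} (c : ℝ) (P : MvPolynomial σ ℝ) :
    coeffNormSq (C c * P) = c^2 * coeffNormSq P := by
  classical
  have hsub : (C c * P).support ⊆ P.support := by
    intro m hm
    rw [MvPolynomial.mem_support_iff] at hm ⊢
    rw [MvPolynomial.coeff_C_mul] at hm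
    exact fun h => hm (by rw [h, mul_zero])
  rw [coeffNormSq_eq_sum_subset' _ hsub]
  unfold coeffNormSq
  rw [Finset.mul_sum]
  refine Finset.sum_congr rfl (fun m _ => ?_)
  rw [MvPolynomial.coeff_C_mul]
  ring


-- coefficient of (∑ X j) * S
lemma coeff_ellmul {T : ℕ} (S : MvPolynomial (Fin T) ℝ) (m : Fin T →₀ ℕ) :
    ((∑ j : Fin T, X j) * S).coeff m = ∑ l ∈ m.support, S.coeff (m - Finsupp.single l 1) := by
  classical
  rw [Finset.sum_mul, MvPolynomial.coeff_sum]
  have : ∀ j : Fin T, (X j * S).coeff m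
      = if j ∈ m.support then S.coeff (m - Finsupp.single j 1) else 0 := by
    intro j
    rw [mul_comm]
    exact MvPolynomial.coeff_mul_X' m j S
  simp_rw [this]
  rw [Finset.sum_ite_mem]
  congr 1
  simp [Finset.inter_eq_right.2 (Finset.subset_univ _)]

-- support card of a Finsupp is at most its sum
lemma card_support_le_sum {T : ℕ} (n : Fin T →₀ ℕ) : n.support.card ≤ n.sum (fun _ e => e) := by
  classical
  rw [Finsupp.sum]
  calc n.support.card = ∑ _x ∈ n.support, 1 := by simp
  _ ≤ ∑ x ∈ n.support, n x := by
      refine Finset.sum_le_sum (fun x hx => ?_)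
      have := Finsupp.mem_support_iff.1 hx
      omega

-- number of monomials in the support of S
lemma support_card_le {T k : ℕ} (S : MvPolynomial (Fin T) ℝ) (hS : S.totalDegree ≤ k) :
    S.support.card ≤ (k+1)^T := by
  classical
  have h : ∀ m ∈ S.support, ∀ j, m j ≤ k := by
    intro m hm j
    have h1 : m j ≤ m.sum (fun _ e => e) := by
      by_cases hj : j ∈ m.support
      · rw [Finsupp.sum]
        exact Finset.single_le_sum (f := fun x => m x) (fun _ _ => Nat.zero_le _) hj
      · have : m j = 0 := by simpa [Finsupp.mem_support_iff] using hj
        omega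
    exact le_trans h1 (le_trans (MvPolynomial.le_totalDegree hm) hS)
  have hinj : Set.InjOn (fun (m : Fin T →₀ ℕ) => fun (j : Fin T) => (⟨min (m j) k, by omega⟩ : Fin (k+1)))
      S.support := by
    intro a ha b hb hab
    ext j
    have ha' := h a ha j
    have hb' := h b hb j
    have := congrFun hab j
    simp only [Fin.mk.injEq] at this
    omega
  calc S.support.card ≤ Fintype.card (Fin T → Fin (k+1)) :=
        Finset.card_le_card_of_injOn _ (fun _ _ => Finset.mem_univ _) hinj
  _ = (k+1)^T := by simp


variable {α : Type*} [DecidableEq α]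

lemma aux1 (F : Finset α) (r : ℕ) (f : Finset α → ℝ) :
    ∑ J ∈ F.powersetCard (r+1), ∑ j ∈ J, f (J.erase j)
    = ∑ I ∈ F.powersetCard r, ((F.card - r : ℕ) : ℝ) * f I := by
  have hR : ∀ I ∈ F.powersetCard r, ((F.card - r : ℕ) : ℝ) * f I = ∑ _x ∈ F \ I, f I := by
    intro I hI
    rw [Finset.mem_powersetCard] at hI
    rw [Finset.sum_const, Finset.card_sdiff_of_subset hI.1, hI.2, nsmul_eq_mul]
  rw [Finset.sum_congr rfl hR, Finset.sum_sigma' (F.powersetCard (r+1)) (fun J => J)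
    (fun J j => f (J.erase j)), Finset.sum_sigma' (F.powersetCard r) (fun I => F \ I)
    (fun I _ => f I)]
  refine Finset.sum_nbij' (fun p => ⟨p.1.erase p.2, p.2⟩) (fun q => ⟨insert q.2 q.1, q.2⟩)
    ?_ ?_ ?_ ?_ ?_
  · rintro ⟨J, j⟩ hp
    rw [Finset.mem_sigma] at hp
    obtain ⟨hJ, hj⟩ := hp
    rw [Finset.mem_powersetCard] at hJ
    rw [Finset.mem_sigma, Finset.mem_powersetCard]
    refine ⟨⟨(Finset.erase_subset _ _).trans hJ.1, ?_⟩, ?_⟩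
    · rw [Finset.card_erase_of_mem hj, hJ.2]
      omega
    · rw [Finset.mem_sdiff]
      exact ⟨hJ.1 hj, Finset.notMem_erase _ _⟩
  · rintro ⟨I, x⟩ hq
    rw [Finset.mem_sigma] at hq
    obtain ⟨hI, hx⟩ := hq
    rw [Finset.mem_powersetCard] at hI
    rw [Finset.mem_sdiff] at hx
    rw [Finset.mem_sigma, Finset.mem_powersetCard]
    refine ⟨⟨Finset.insert_subset hx.1 hI.1, ?_⟩, Finset.mem_insert_self _ _⟩
    rw [Finset.card_insert_of_notMem hx.2, hI.2]
  · rintro ⟨J, j⟩ hp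
    rw [Finset.mem_sigma] at hp
    simp only [Sigma.mk.inj_iff, heq_eq_eq, and_true]
    exact Finset.insert_erase hp.2
  · rintro ⟨I, x⟩ hq
    rw [Finset.mem_sigma] at hq
    rw [Finset.mem_sdiff] at hq
    simp only [Sigma.mk.inj_iff, heq_eq_eq, and_true]
    exact Finset.erase_insert hq.2.2
  · rintro ⟨J, j⟩ _
    rfl

lemma aux2 (F : Finset α) (r : ℕ) (f : Finset α → ℝ) :
    ∑ H ∈ F.powersetCard r, ∑ x ∈ F \ H, f (insert x H)
    = ∑ I ∈ F.powersetCard (r+1), ((r+1 : ℕ) : ℝ) * f I := by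
  have hR : ∀ I ∈ F.powersetCard (r+1), ((r+1 : ℕ) : ℝ) * f I = ∑ _x ∈ I, f I := by
    intro I hI
    rw [Finset.mem_powersetCard] at hI
    rw [Finset.sum_const, hI.2, nsmul_eq_mul]
  rw [Finset.sum_congr rfl hR, Finset.sum_sigma' (F.powersetCard r) (fun H => F \ H)
    (fun H x => f (insert x H)), Finset.sum_sigma' (F.powersetCard (r+1)) (fun I => I)
    (fun I _ => f I)]
  refine Finset.sum_nbij' (fun p => ⟨insert p.2 p.1, p.2⟩) (fun q => ⟨q.1.erase q.2, q.2⟩)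
    ?_ ?_ ?_ ?_ ?_
  · rintro ⟨H, x⟩ hp
    rw [Finset.mem_sigma] at hp
    obtain ⟨hH, hx⟩ := hp
    rw [Finset.mem_powersetCard] at hH
    rw [Finset.mem_sdiff] at hx
    rw [Finset.mem_sigma, Finset.mem_powersetCard]
    refine ⟨⟨Finset.insert_subset hx.1 hH.1, ?_⟩, Finset.mem_insert_self _ _⟩
    rw [Finset.card_insert_of_notMem hx.2, hH.2]
  · rintro ⟨I, x⟩ hq
    rw [Finset.mem_sigma] at hq
    obtain ⟨hI, hx⟩ := hq
    rw [Finset.mem_powersetCard] at hI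
    rw [Finset.mem_sigma, Finset.mem_powersetCard, Finset.mem_sdiff]
    refine ⟨⟨(Finset.erase_subset _ _).trans hI.1, ?_⟩, hI.1 hx, Finset.notMem_erase _ _⟩
    rw [Finset.card_erase_of_mem hx, hI.2]
    omega
  · rintro ⟨H, x⟩ hp
    rw [Finset.mem_sigma, Finset.mem_sdiff] at hp
    simp only [Sigma.mk.inj_iff, heq_eq_eq, and_true]
    exact Finset.erase_insert hp.2.2
  · rintro ⟨I, x⟩ hq
    rw [Finset.mem_sigma] at hq
    simp only [Sigma.mk.inj_iff, heq_eq_eq, and_true]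
    exact Finset.insert_erase hq.2
  · rintro ⟨H, x⟩ _
    rfl

lemma cross_reindex (F : Finset α) (r : ℕ) (hr : 1 ≤ r) (v : Finset α → ℝ) :
    ∑ J ∈ F.powersetCard (r+1), ∑ j ∈ J, ∑ j' ∈ J.erase j, v (J.erase j) * v (J.erase j')
    = ∑ H ∈ F.powersetCard (r-1), ∑ x ∈ F \ H, ∑ x' ∈ (F \ H).erase x,
        v (insert x H) * v (insert x' H) := by
  rw [Finset.sum_sigma' (F.powersetCard (r+1)) (fun J => J)
    (fun J j => ∑ j' ∈ J.erase j, v (J.erase j) * v (J.erase j'))]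
  rw [Finset.sum_sigma' ((F.powersetCard (r+1)).sigma (fun J => J)) (fun p => p.1.erase p.2)
    (fun p j' => v (p.1.erase p.2) * v (p.1.erase j'))]
  rw [Finset.sum_sigma' (F.powersetCard (r-1)) (fun H => F \ H)
    (fun H x => ∑ x' ∈ (F \ H).erase x, v (insert x H) * v (insert x' H))]
  rw [Finset.sum_sigma' ((F.powersetCard (r-1)).sigma (fun H => F \ H))
    (fun q => (F \ q.1).erase q.2) (fun q x' => v (insert q.2 q.1) * v (insert x' q.1))]
  refine Finset.sum_nbij' (fun p => ⟨⟨(p.1.1.erase p.1.2).erase p.2, p.2⟩, p.1.2⟩)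
    (fun q => ⟨⟨insert q.2 (insert q.1.2 q.1.1), q.2⟩, q.1.2⟩) ?_ ?_ ?_ ?_ ?_
  · rintro ⟨⟨J, j⟩, j'⟩ hp
    simp only [Finset.mem_sigma, Finset.mem_powersetCard] at hp
    obtain ⟨⟨⟨hJF, hJc⟩, hj⟩, hj'⟩ := hp
    have hj'J : j' ∈ J := Finset.mem_of_mem_erase hj'
    have hne : j' ≠ j := Finset.ne_of_mem_erase hj'
    simp only [Finset.mem_sigma, Finset.mem_powersetCard]
    refine ⟨⟨⟨(Finset.erase_subset _ _).trans ((Finset.erase_subset _ _).trans hJF), ?_⟩, ?_⟩, ?_⟩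
    · rw [Finset.card_erase_of_mem hj', Finset.card_erase_of_mem hj, hJc]
      omega
    · rw [Finset.mem_sdiff]
      exact ⟨hJF hj'J, Finset.notMem_erase _ _⟩
    · rw [Finset.mem_erase, Finset.mem_sdiff]
      refine ⟨fun h => hne h.symm, hJF hj, fun hjH => (Finset.notMem_erase j (J.erase j')) ?_⟩
      rwa [Finset.erase_right_comm] at hjH
  · rintro ⟨⟨H, x⟩, x'⟩ hq
    simp only [Finset.mem_sigma, Finset.mem_powersetCard, Finset.mem_sdiff, Finset.mem_erase] at hq
    obtain ⟨⟨⟨hHF, hHc⟩, hxF, hxH⟩, hne, hx'F, hx'H⟩ := hq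
    have hx'ins : x' ∉ insert x H := by
      simp only [Finset.mem_insert]
      rintro (h | h); exact hne h; exact hx'H h
    simp only [Finset.mem_sigma, Finset.mem_powersetCard, Finset.mem_erase]
    refine ⟨⟨⟨Finset.insert_subset hx'F (Finset.insert_subset hxF hHF), ?_⟩,
      Finset.mem_insert_self _ _⟩, ?_, Finset.mem_insert_of_mem (Finset.mem_insert_self _ _)⟩
    · rw [Finset.card_insert_of_notMem hx'ins, Finset.card_insert_of_notMem hxH, hHc]
      omega
    · exact fun h => hne h.symm
  · rintro ⟨⟨J, j⟩, j'⟩ hp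
    simp only [Finset.mem_sigma, Finset.mem_powersetCard] at hp
    obtain ⟨⟨⟨hJF, hJc⟩, hj⟩, hj'⟩ := hp
    have hj'J : j' ∈ J := Finset.mem_of_mem_erase hj'
    simp only [Sigma.mk.inj_iff, heq_eq_eq, and_true]
    have h1 : insert j' ((J.erase j).erase j') = J.erase j := Finset.insert_erase hj'
    rw [h1, Finset.insert_erase hj]
  · rintro ⟨⟨H, x⟩, x'⟩ hq
    simp only [Finset.mem_sigma, Finset.mem_powersetCard, Finset.mem_sdiff, Finset.mem_erase] at hq
    obtain ⟨⟨⟨hHF, hHc⟩, hxF, hxH⟩, hne, hx'F, hx'H⟩ := hq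
    have hx'ins : x' ∉ insert x H := by
      simp only [Finset.mem_insert]
      rintro (h | h); exact hne h; exact hx'H h
    simp only [Sigma.mk.inj_iff, heq_eq_eq, and_true]
    rw [Finset.erase_insert hx'ins, Finset.erase_insert hxH]
  · rintro ⟨⟨J, j⟩, j'⟩ hp
    simp only [Finset.mem_sigma, Finset.mem_powersetCard] at hp
    obtain ⟨⟨⟨hJF, hJc⟩, hj⟩, hj'⟩ := hp
    have hj'J : j' ∈ J := Finset.mem_of_mem_erase hj'
    have hne : j' ≠ j := Finset.ne_of_mem_erase hj'
    have hjJ' : j ∈ J.erase j' := Finset.mem_erase.2 ⟨fun h => hne h.symm, hj⟩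
    have h1 : insert j' ((J.erase j).erase j') = J.erase j := Finset.insert_erase hj'
    have h2 : insert j ((J.erase j).erase j') = J.erase j' := by
      rw [Finset.erase_right_comm]
      exact Finset.insert_erase hjJ'
    simp only [h1, h2]

lemma sq_sum_split (s : Finset α) (a : α → ℝ) :
    (∑ x ∈ s, a x)^2 = ∑ x ∈ s, (a x)^2 + ∑ x ∈ s, ∑ x' ∈ s.erase x, a x * a x' := by
  rw [sq, Finset.sum_mul_sum, ← Finset.sum_add_distrib]
  refine Finset.sum_congr rfl (fun x hx => ?_)
  rw [← Finset.add_sum_erase s (fun x' => a x * a x') hx, sq]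

lemma inversion (F : Finset α) (r : ℕ) (hr : 2*r + 1 ≤ F.card) (v : Finset α → ℝ) :
    ∑ I ∈ F.powersetCard r, (v I)^2
    ≤ ∑ J ∈ F.powersetCard (r+1), (∑ j ∈ J, v (J.erase j))^2 := by
  rcases Nat.eq_zero_or_pos r with hr0 | hrpos
  · subst hr0
    rw [Finset.powersetCard_zero]
    have hterm : ∀ J ∈ F.powersetCard 1, (∑ j ∈ J, v (J.erase j))^2 = (v ∅)^2 := by
      intro J hJ
      rw [Finset.mem_powersetCard] at hJ
      obtain ⟨a, ha⟩ := Finset.card_eq_one.1 hJ.2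
      subst ha
      simp
    rw [Finset.sum_congr rfl hterm, Finset.sum_const, Finset.card_powersetCard,
      Nat.choose_one_right, nsmul_eq_mul]
    have h1 : (1:ℝ) ≤ (F.card : ℝ) := by
      have : 1 ≤ F.card := by omega
      exact_mod_cast this
    simp only [Finset.sum_singleton]
    nlinarith [sq_nonneg (v ∅)]
  · -- r ≥ 1
    have key : ∑ J ∈ F.powersetCard (r+1), (∑ j ∈ J, v (J.erase j))^2
        = ((F.card - r : ℕ) : ℝ) * ∑ I ∈ F.powersetCard r, (v I)^2
          + ∑ J ∈ F.powersetCard (r+1), ∑ j ∈ J, ∑ j' ∈ J.erase j, v (J.erase j) * v (J.erase j') := by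
      have hterm : ∀ J ∈ F.powersetCard (r+1), (∑ j ∈ J, v (J.erase j))^2
          = ∑ j ∈ J, (v (J.erase j))^2 + ∑ j ∈ J, ∑ j' ∈ J.erase j, v (J.erase j) * v (J.erase j') :=
        fun J _ => sq_sum_split J (fun j => v (J.erase j))
      rw [Finset.sum_congr rfl hterm, Finset.sum_add_distrib, aux1 F r (fun I => (v I)^2),
        Finset.mul_sum]
    rw [key, cross_reindex F r hrpos v]
    -- per-H: ∑_x ∑_{x'≠x} v(ins x)v(ins x') = (∑ v ins)² − ∑ v(ins)²
    have hH : ∀ H, ∑ x ∈ F \ H, ∑ x' ∈ (F \ H).erase x, v (insert x H) * v (insert x' H)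
        = (∑ x ∈ F \ H, v (insert x H))^2 - ∑ x ∈ F \ H, (v (insert x H))^2 := by
      intro H
      have := sq_sum_split (F \ H) (fun x => v (insert x H))
      linarith
    rw [Finset.sum_congr rfl (fun H _ => hH H), Finset.sum_sub_distrib]
    have haux2 : ∑ H ∈ F.powersetCard (r-1), ∑ x ∈ F \ H, (v (insert x H))^2
        = ((r-1+1 : ℕ) : ℝ) * ∑ I ∈ F.powersetCard (r-1+1), (v I)^2 := by
      rw [aux2 F (r-1) (fun I => (v I)^2), Finset.mul_sum]
    have hr1 : r - 1 + 1 = r := by omega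
    rw [hr1] at haux2
    rw [haux2]
    have hsq : (0:ℝ) ≤ ∑ H ∈ F.powersetCard (r-1), (∑ x ∈ F \ H, v (insert x H))^2 :=
      Finset.sum_nonneg (fun H _ => sq_nonneg _)
    have hnn : (0:ℝ) ≤ ∑ I ∈ F.powersetCard r, (v I)^2 :=
      Finset.sum_nonneg (fun I _ => sq_nonneg _)
    have hcard : (2*r + 1 : ℝ) ≤ ((F.card : ℕ) : ℝ) := by exact_mod_cast hr
    have hFr : ((F.card - r : ℕ) : ℝ) = (F.card : ℝ) - (r : ℝ) := by
      have : r ≤ F.card := by omega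
      push_cast [Nat.cast_sub this]
      ring
    rw [hFr]
    nlinarith


lemma epoly_lt (d : ℕ) (hd : 4 ≤ d) : d^3 + 3*d^2 + 12*d + 2 < 4^d := by
  induction d with
  | zero => omega
  | succ n ih =>
    rcases Nat.lt_or_ge n 4 with h4 | h4
    · interval_cases n <;> simp_all <;> norm_num
    · have hn := ih (by omega)
      have h16 : 16 ≤ n^2 := by nlinarith
      calc (n+1)^3 + 3*(n+1)^2 + 12*(n+1) + 2
          ≤ 4*(n^3 + 3*n^2 + 12*n + 2) := by nlinarith
      _ < 4*4^n := by omega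
      _ = 4^(n+1) := by ring

lemma arith_main (d : ℕ) (hd : 1 ≤ d) :
    (2*(2*(d+1)*(10*d)^((d+1)/2))^d)^(2*d) * d^(10*d) * d^2 < (200*d^2)^(4^d) := by
  rcases Nat.lt_or_ge d 4 with h4 | h4
  · interval_cases d
    · norm_num
    · norm_num
    · norm_num
  · -- packaged bound
    have hd2 : 1 ≤ d^2 := by nlinarith
    set K := 200*d^2 with hK
    have hK2 : 2 ≤ K := by rw [hK]; nlinarith
    have hbase1 : 2 ≤ K := hK2
    have hbase2 : d+1 ≤ K := by rw [hK]; nlinarith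
    have hbase3 : 10*d ≤ K := by rw [hK]; nlinarith
    have hbase4 : d ≤ K := by rw [hK]; nlinarith
    have hq : 2*((d+1)/2) ≤ d+1 := by omega
    have hbase2' : 2*(d+1) ≤ K := by rw [hK]; nlinarith
    -- LHS ≤ K^(d^3+3d^2+12d+2)
    have step1 : 2*(d+1)*(10*d)^((d+1)/2) ≤ K^(1 + (d+1)/2) := by
      rw [pow_add, pow_one]
      exact Nat.mul_le_mul hbase2' (Nat.pow_le_pow_left hbase3 _)
    have step2 : 2*(2*(d+1)*(10*d)^((d+1)/2))^d ≤ K^(1 + (1 + (d+1)/2)*d) := by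
      rw [pow_add, pow_one, pow_mul]
      exact Nat.mul_le_mul hbase1 (Nat.pow_le_pow_left step1 _)
    have step3 : (2*(2*(d+1)*(10*d)^((d+1)/2))^d)^(2*d) ≤ K^((1 + (1 + (d+1)/2)*d)*(2*d)) := by
      have := Nat.pow_le_pow_left step2 (2*d)
      rwa [← pow_mul] at this
    have step4 : d^(10*d) ≤ K^(10*d) := Nat.pow_le_pow_left hbase4 _
    have step5 : d^2 ≤ K^2 := Nat.pow_le_pow_left hbase4 _
    have hE : (1 + (1 + (d+1)/2)*d)*(2*d) + 10*d + 2 ≤ d^3 + 3*d^2 + 12*d + 2 := by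
      have : (1 + (1 + (d+1)/2)*d)*(2*d) = 2*d + 2*d^2 + (2*((d+1)/2))*d^2 := by ring
      rw [this]
      have h2 : (2*((d+1)/2))*d^2 ≤ (d+1)*d^2 := Nat.mul_le_mul_right _ hq
      nlinarith
    calc (2*(2*(d+1)*(10*d)^((d+1)/2))^d)^(2*d) * d^(10*d) * d^2
        ≤ K^((1 + (1 + (d+1)/2)*d)*(2*d)) * K^(10*d) * K^2 :=
          Nat.mul_le_mul (Nat.mul_le_mul step3 step4) step5
    _ = K^((1 + (1 + (d+1)/2)*d)*(2*d) + 10*d + 2) := by rw [← pow_add, ← pow_add]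
    _ ≤ K^(d^3 + 3*d^2 + 12*d + 2) := Nat.pow_le_pow_right (by omega) hE
    _ < K^(4^d) := Nat.pow_lt_pow_right (by omega) (epoly_lt d h4)

set_option maxHeartbeats 1000000 in
lemma core (d T : ℕ) (hd : 1 ≤ d) (hT : T = 10*d) (S : MvPolynomial (Fin T) ℝ)
    (hS : S.totalDegree ≤ d - 1) (hSne : S ≠ 0) (Bad : Finset (Fin T))
    (hBadCard : 5*d + 1 ≤ Bad.card) (τ : ℝ) (hτ0 : 0 ≤ τ)
    (hτ : ∀ m : Fin T →₀ ℕ, (∃ j ∈ Bad, m j = 1) → |((∑ j : Fin T, X j) * S).coeff m| ≤ τ) :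
    ∀ n, |S.coeff n| ≤ ((2*(2*(d+1)*T^((d+1)/2))^d)^d : ℕ) * τ := by
  classical
  -- degree facts
  have hdeg : ∀ n ∈ S.support, (n.sum fun _ e => e) ≤ d - 1 := by
    intro n hn; exact le_trans (MvPolynomial.le_totalDegree hn) hS
  set bc : (Fin T →₀ ℕ) → ℕ := fun n => ∑ k ∈ Bad, n k with hbc
  have hsum_univ : ∀ n : Fin T →₀ ℕ, (n.sum fun _ e => e) = ∑ k : Fin T, n k := by
    intro n
    rw [Finsupp.sum]
    exact Finset.sum_subset (Finset.subset_univ _) (by intro x _ hx; simpa [Finsupp.mem_support_iff] using hx)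
  have hbc_le : ∀ n ∈ S.support, bc n ≤ d - 1 := by
    intro n hn
    refine le_trans ?_ (hdeg n hn)
    rw [hsum_univ n]
    exact Finset.sum_le_sum_of_subset (Finset.subset_univ _)
  -- constants
  set q : ℕ := (d+1)/2 with hq
  set Anat : ℕ := 2*(d+1)*T^q with hAnat
  set A : ℝ := (Anat : ℝ) with hA
  have hAnat1 : 1 ≤ Anat := by
    rw [hAnat]
    have hT0 : 0 < T := by omega
    have h2 : 1 ≤ T^q := Nat.pow_pos hT0
    have h1 : 1 ≤ 2*(d+1) := by omega
    calc 1 = 1*1 := by ring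
    _ ≤ (2*(d+1))*(T^q) := Nat.mul_le_mul h1 h2
  have hA1 : (1:ℝ) ≤ A := by rw [hA]; exact_mod_cast hAnat1
  have hAd1 : (1:ℝ) ≤ A^d := one_le_pow₀ hA1
  set η : ℝ := 1/(2*A^d) with hη
  have hη0 : 0 < η := by rw [hη]; positivity
  have hη1 : η ≤ 1 := by
    rw [hη]
    rw [div_le_one (by linarith)]
    linarith
  -- max coefficient
  obtain ⟨nstar, hnstar_mem, hnstar_max⟩ :=
    Finset.exists_max_image S.support (fun n => |S.coeff n|)
      (by rwa [Finset.nonempty_iff_ne_empty, Ne, MvPolynomial.support_eq_empty])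
  set sstar : ℝ := |S.coeff nstar| with hsstar
  have hsstar0 : 0 < sstar := by
    rw [hsstar]
    exact abs_pos.2 (MvPolynomial.mem_support_iff.1 hnstar_mem)
  -- scale selection
  have hDne : ((Finset.range d).filter
      (fun b => ∃ n ∈ S.support, bc n = b ∧ sstar * η^b ≤ |S.coeff n|)).Nonempty := by
    refine ⟨bc nstar, ?_⟩
    rw [Finset.mem_filter, Finset.mem_range]
    refine ⟨by have := hbc_le nstar hnstar_mem; omega, nstar, hnstar_mem, rfl, ?_⟩
    calc sstar * η^(bc nstar) ≤ sstar * 1 := by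
          refine mul_le_mul_of_nonneg_left ?_ (le_of_lt hsstar0)
          exact pow_le_one₀ (le_of_lt hη0) hη1
    _ = |S.coeff nstar| := by rw [mul_one]
  obtain ⟨bst, hbst_mem, hbst_max⟩ := Finset.exists_max_image _ id hDne
  rw [Finset.mem_filter, Finset.mem_range] at hbst_mem
  obtain ⟨hbst_lt, nhat, hnhat_mem, hnhat_bc, hnhat_big⟩ := hbst_mem
  set M : ℝ := |S.coeff nhat| with hM
  have hM0 : 0 < M := by
    rw [hM]; exact abs_pos.2 (MvPolynomial.mem_support_iff.1 hnhat_mem)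
  have hMs : sstar * η^bst ≤ M := hnhat_big
  -- HIGH lemma
  have HIGH : ∀ n : Fin T →₀ ℕ, bc n = bst + 1 → |S.coeff n| ≤ η * M := by
    intro n hbcn
    by_cases hn : n ∈ S.support
    · have h1 : bst + 1 < d := by have := hbc_le n hn; omega
      by_cases h2 : sstar * η^(bst+1) ≤ |S.coeff n|
      · exfalso
        have hmem : (bst+1) ∈ (Finset.range d).filter
            (fun b => ∃ n ∈ S.support, bc n = b ∧ sstar * η^b ≤ |S.coeff n|) := by
          rw [Finset.mem_filter, Finset.mem_range]
          exact ⟨h1, n, hn, hbcn, h2⟩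
        have := hbst_max _ hmem
        simp only [id] at this
        omega
      · push_neg at h2
        refine le_trans (le_of_lt h2) ?_
        have : sstar * η^(bst+1) = η * (sstar * η^bst) := by ring
        rw [this]
        exact mul_le_mul_of_nonneg_left hMs (le_of_lt hη0)
    · have : S.coeff n = 0 := by simpa [MvPolynomial.mem_support_iff] using hn
      rw [this, abs_zero]
      positivity
  -- supports of nhat
  have hnhat_supp_card : nhat.support.card ≤ d - 1 :=
    le_trans (card_support_le_sum nhat) (hdeg nhat hnhat_mem)
  -- F
  set F : Finset (Fin T) := Bad \ nhat.support with hF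
  have hFBad : F ⊆ Bad := Finset.sdiff_subset
  have hFnhat : ∀ l ∈ F, nhat l = 0 := by
    intro l hl
    rw [hF, Finset.mem_sdiff] at hl
    simpa [Finsupp.mem_support_iff] using hl.2
  have hFcard : 4*d + 2 ≤ F.card := by
    have h1 := Finset.le_card_sdiff nhat.support Bad
    rw [← hF] at h1
    omega
  have hFT : F.card ≤ T := by
    have h : F ⊆ Finset.univ := Finset.subset_univ _
    simpa using Finset.card_le_card h
  -- oneJ
  set oneJ : Finset (Fin T) → (Fin T →₀ ℕ) := fun J => ∑ j ∈ J, Finsupp.single j 1 with honeJ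
  have oneJ_apply : ∀ (J : Finset (Fin T)) x, oneJ J x = if x ∈ J then 1 else 0 := by
    intro J x
    rw [honeJ]
    simp only [Finsupp.finset_sum_apply, Finsupp.single_apply]
    rw [Finset.sum_ite_eq' J x (fun _ => 1)]
  have oneJ_supp : ∀ J : Finset (Fin T), (oneJ J).support = J := by
    intro J
    ext x
    rw [Finsupp.mem_support_iff, oneJ_apply]
    split_ifs with h <;> simp [h]
  -- u
  set u : (Fin T →₀ ℕ) → Finset (Fin T) → ℝ := fun κ J => S.coeff (nhat - κ + oneJ J) with hu
  -- pointwise facts about κ ≤ nhat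
  have hκpt : ∀ (κ : Fin T →₀ ℕ), κ ≤ nhat → ∀ x, κ x ≤ nhat x := by
    intro κ hκ x; exact Finsupp.le_def.1 hκ x
  -- sum over Bad of κ equals its total sum when support ⊆ Bad
  have hsumBad : ∀ (κ : Fin T →₀ ℕ), κ.support ⊆ Bad → ∑ k ∈ Bad, κ k = (κ.sum fun _ e => e) := by
    intro κ hκ
    rw [Finsupp.sum]
    exact (Finset.sum_subset hκ (by intro x _ hx; simpa [Finsupp.mem_support_iff] using hx)).symm
  -- main relation
  have REL : ∀ (κ : Fin T →₀ ℕ), κ ≤ nhat → κ.support ⊆ Bad →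
      ∀ r, (κ.sum fun _ e => e) = r → r ≤ bst →
      ∀ J ⊆ F, J.card = r + 1 →
      |∑ j ∈ J, u κ (J.erase j)|
        ≤ τ + ((d-1:ℕ):ℝ) * (η*M) + ∑ l ∈ ((nhat - κ).support.filter (fun k => k ∈ Bad)),
            |u (κ + Finsupp.single l 1) J| := by
    intro κ hκn hκB r hκsum hrb J hJF hJc
    have hκa := hκpt κ hκn
    -- the Q-monomial
    set m : Fin T →₀ ℕ := nhat - κ + oneJ J with hmdef
    have hm_apply : ∀ x, m x = (nhat x - κ x) + (if x ∈ J then 1 else 0) := by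
      intro x
      rw [hmdef, Finsupp.add_apply, Finsupp.tsub_apply, oneJ_apply]
    have hsub_supp : (nhat - κ).support ⊆ nhat.support := by
      intro x hx
      rw [Finsupp.mem_support_iff] at hx ⊢
      rw [Finsupp.tsub_apply] at hx
      omega
    have hdisjJ : Disjoint (nhat - κ).support J := by
      refine Finset.disjoint_left.2 ?_
      intro x hx hxJ
      have h1 := hsub_supp hx
      have h2 := hJF hxJ
      rw [hF, Finset.mem_sdiff] at h2
      exact h2.2 h1
    have hm_supp : m.support = (nhat - κ).support ∪ J := by
      rw [hmdef]
      rw [Finsupp.support_add_eq]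
      · rw [oneJ_supp]
      · rw [oneJ_supp]; exact hdisjJ
    -- τ bound on coeff m
    have hJne : J.Nonempty := Finset.card_pos.1 (by omega)
    obtain ⟨j0, hj0⟩ := hJne
    have hmj0 : m j0 = 1 := by
      rw [hm_apply]
      have h1 : nhat j0 = 0 := hFnhat _ (hJF hj0)
      have h2 : κ j0 ≤ nhat j0 := hκa j0
      simp [hj0]
      omega
    have hτm : |((∑ j : Fin T, X j) * S).coeff m| ≤ τ :=
      hτ m ⟨j0, hFBad (hJF hj0), hmj0⟩
    -- expand coefficient
    have hexp : ((∑ j : Fin T, X j) * S).coeff m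
        = ∑ l ∈ (nhat - κ).support, S.coeff (m - Finsupp.single l 1)
          + ∑ l ∈ J, S.coeff (m - Finsupp.single l 1) := by
      rw [coeff_ellmul, hm_supp, Finset.sum_union hdisjJ]
    -- identify J-terms
    have hEJ : ∀ l ∈ J, S.coeff (m - Finsupp.single l 1) = u κ (J.erase l) := by
      intro l hl
      have h0 : nhat l = 0 := hFnhat _ (hJF hl)
      have h0' : κ l = 0 := by have := hκa l; omega
      have : m - Finsupp.single l 1 = nhat - κ + oneJ (J.erase l) := by
        ext x
        simp only [Finsupp.tsub_apply, Finsupp.add_apply, hm_apply, oneJ_apply,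
          Finsupp.single_apply]
        by_cases hx : x = l
        · subst hx
          simp [hl, h0, h0']
        · simp only [Finset.mem_erase, hx, Ne.symm hx, if_neg, ite_false, and_true,
            not_false_iff, tsub_zero]
          congr 1
          simp [hx]
      rw [this]
    -- split the support part
    have hsplit : ∑ l ∈ (nhat - κ).support, S.coeff (m - Finsupp.single l 1)
        = ∑ l ∈ ((nhat - κ).support.filter (fun k => k ∈ Bad)), S.coeff (m - Finsupp.single l 1)
          + ∑ l ∈ ((nhat - κ).support.filter (fun k => ¬ (k ∈ Bad))), S.coeff (m - Finsupp.single l 1) :=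
      (Finset.sum_filter_add_sum_filter_not _ _ _).symm
    -- identify Bad-removal terms
    have hEB : ∀ l ∈ ((nhat - κ).support.filter (fun k => k ∈ Bad)),
        S.coeff (m - Finsupp.single l 1) = u (κ + Finsupp.single l 1) J := by
      intro l hl
      rw [Finset.mem_filter] at hl
      have hlsupp := hl.1
      have hlpos : κ l < nhat l := by
        have := Finsupp.mem_support_iff.1 hlsupp
        rw [Finsupp.tsub_apply] at this
        omega
      have hlJ : l ∉ J := Finset.disjoint_left.1 hdisjJ hlsupp
      have : m - Finsupp.single l 1 = nhat - (κ + Finsupp.single l 1) + oneJ J := by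
        ext x
        simp only [Finsupp.tsub_apply, Finsupp.add_apply, hm_apply, oneJ_apply,
          Finsupp.single_apply]
        by_cases hx : x = l
        · subst hx
          simp [hlJ]
          omega
        · simp [Ne.symm hx]
      rw [this]
    -- bound non-Bad removal terms via HIGH
    have hEN : ∀ l ∈ ((nhat - κ).support.filter (fun k => ¬ (k ∈ Bad))),
        |S.coeff (m - Finsupp.single l 1)| ≤ η * M := by
      intro l hl
      rw [Finset.mem_filter] at hl
      refine HIGH _ ?_
      -- bc (m - single l 1) = bst + 1
      have hlB : l ∉ Bad := hl.2
      have hJBad : J ⊆ Bad := fun x hx => hFBad (hJF hx)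
      have hcomp : ∀ k ∈ Bad, (m - (Finsupp.single l 1 : Fin T →₀ ℕ)) k = (nhat k - κ k) + (if k ∈ J then 1 else 0) := by
        intro k hk
        rw [Finsupp.tsub_apply, hm_apply, Finsupp.single_apply]
        have : l ≠ k := fun h => hlB (h ▸ hk)
        simp [this]
      show (∑ k ∈ Bad, (m - (Finsupp.single l 1 : Fin T →₀ ℕ)) k) = bst + 1
      rw [Finset.sum_congr rfl hcomp, Finset.sum_add_distrib]
      have h1 : ∑ k ∈ Bad, (nhat k - κ k) = ∑ k ∈ Bad, nhat k - ∑ k ∈ Bad, κ k :=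
        Finset.sum_tsub_distrib Bad (fun k _ => hκa k)
      have h2 : ∑ k ∈ Bad, κ k = r := by rw [hsumBad κ hκB, hκsum]
      have h3 : ∑ k ∈ Bad, nhat k = bst := hnhat_bc
      have h4 : (∑ k ∈ Bad, if k ∈ J then (1:ℕ) else 0) = J.card := by
        rw [Finset.sum_ite_mem, Finset.inter_eq_right.2 hJBad, Finset.card_eq_sum_ones]
      rw [h1, h2, h3, h4, hJc]
      have hrble : r ≤ bst := hrb
      omega
    -- assemble
    have hkey : ∑ j ∈ J, u κ (J.erase j)
        = ((∑ j : Fin T, X j) * S).coeff m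
          - ∑ l ∈ ((nhat - κ).support.filter (fun k => k ∈ Bad)), u (κ + Finsupp.single l 1) J
          - ∑ l ∈ ((nhat - κ).support.filter (fun k => ¬ (k ∈ Bad))), S.coeff (m - Finsupp.single l 1) := by
      rw [hexp, hsplit, Finset.sum_congr rfl hEJ, Finset.sum_congr rfl hEB]
      ring
    rw [hkey]
    have hcard_filter : (((nhat - κ).support.filter (fun k => ¬ (k ∈ Bad))).card : ℝ) ≤ ((d-1:ℕ):ℝ) := by
      have h5 : ((nhat - κ).support.filter (fun k => ¬ (k ∈ Bad))).card ≤ nhat.support.card := by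
        refine Finset.card_le_card ?_
        exact le_trans (Finset.filter_subset _ _) hsub_supp
      exact_mod_cast le_trans h5 hnhat_supp_card
    have hbound3 : |∑ l ∈ ((nhat - κ).support.filter (fun k => ¬ (k ∈ Bad))),
        S.coeff (m - Finsupp.single l 1)| ≤ ((d-1:ℕ):ℝ) * (η*M) := by
      refine le_trans (Finset.abs_sum_le_sum_abs _ _) ?_
      refine le_trans (Finset.sum_le_sum hEN) ?_
      rw [Finset.sum_const, nsmul_eq_mul]
      refine mul_le_mul_of_nonneg_right hcard_filter ?_
      positivity
    have hbound2 : |∑ l ∈ ((nhat - κ).support.filter (fun k => k ∈ Bad)),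
        u (κ + Finsupp.single l 1) J| ≤ ∑ l ∈ ((nhat - κ).support.filter (fun k => k ∈ Bad)),
        |u (κ + Finsupp.single l 1) J| := Finset.abs_sum_le_sum_abs _ _
    calc |((∑ j : Fin T, X j) * S).coeff m
          - ∑ l ∈ ((nhat - κ).support.filter (fun k => k ∈ Bad)), u (κ + Finsupp.single l 1) J
          - ∑ l ∈ ((nhat - κ).support.filter (fun k => ¬ (k ∈ Bad))), S.coeff (m - Finsupp.single l 1)|
        ≤ |((∑ j : Fin T, X j) * S).coeff m|
          + |∑ l ∈ ((nhat - κ).support.filter (fun k => k ∈ Bad)), u (κ + Finsupp.single l 1) J|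
          + |∑ l ∈ ((nhat - κ).support.filter (fun k => ¬ (k ∈ Bad))), S.coeff (m - Finsupp.single l 1)| := by
          exact (abs_sub _ _).trans (add_le_add_left (abs_sub _ _) _)
    _ ≤ τ + ((d-1:ℕ):ℝ) * (η*M) + ∑ l ∈ ((nhat - κ).support.filter (fun k => k ∈ Bad)),
            |u (κ + Finsupp.single l 1) J| := by
          have := add_le_add (add_le_add hτm hbound2) hbound3
          linarith
  have hηM0 : 0 ≤ η * M := le_of_lt (mul_pos hη0 hM0)
  -- one inversion step
  have KEYSTEP : ∀ r : ℕ, r ≤ bst → ∀ Bn : ℝ, 0 ≤ Bn →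
      (∀ (κ' : Fin T →₀ ℕ), κ' ≤ nhat → κ'.support ⊆ Bad → (κ'.sum fun _ e => e) = r + 1 →
        ∀ J' ⊆ F, J'.card = r + 1 → |u κ' J'| ≤ Bn) →
      ∀ (κ : Fin T →₀ ℕ), κ ≤ nhat → κ.support ⊆ Bad → (κ.sum fun _ e => e) = r →
      ∀ J0 ⊆ F, J0.card = r → |u κ J0| ≤ ((T^q : ℕ) : ℝ) * (τ + ((d-1:ℕ):ℝ)*(η*M) + ((d-1:ℕ):ℝ)*Bn) := by
    intro r hr Bn hBn0 hnext κ hκn hκB hκsum J0 hJ0F hJ0c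
    have hκa := hκpt κ hκn
    set ρ : ℝ := τ + ((d-1:ℕ):ℝ)*(η*M) + ((d-1:ℕ):ℝ)*Bn with hρ
    have hρ0 : 0 ≤ ρ := by rw [hρ]; positivity
    -- bound all (r+1)-sums
    have hUbound : ∀ J ∈ F.powersetCard (r+1), |∑ j ∈ J, u κ (J.erase j)| ≤ ρ := by
      intro J hJ
      rw [Finset.mem_powersetCard] at hJ
      have hrel := REL κ hκn hκB r hκsum hr J hJ.1 hJ.2
      refine le_trans hrel ?_
      rw [hρ]
      have hterm : ∀ l ∈ ((nhat - κ).support.filter (fun k => k ∈ Bad)),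
          |u (κ + Finsupp.single l 1) J| ≤ Bn := by
        intro l hl
        rw [Finset.mem_filter] at hl
        have hlB : l ∈ Bad := hl.2
        have hlpos : κ l < nhat l := by
          have := Finsupp.mem_support_iff.1 hl.1
          rw [Finsupp.tsub_apply] at this
          omega
        refine hnext (κ + Finsupp.single l 1) ?_ ?_ ?_ J hJ.1 hJ.2
        · rw [Finsupp.le_def]
          intro x
          rw [Finsupp.add_apply, Finsupp.single_apply]
          by_cases hx : l = x
          · subst hx; have := hκa l; simp; omega
          · simp [hx]; exact hκa x
        · refine subset_trans Finsupp.support_add ?_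
          refine Finset.union_subset hκB ?_
          refine subset_trans Finsupp.support_single_subset ?_
          simpa using hlB
        · rw [Finsupp.sum_add_index' (by simp) (by intros; rfl)]
          rw [hκsum, Finsupp.sum_single_index (by rfl)]
      have hsum2 : ∑ l ∈ ((nhat - κ).support.filter (fun k => k ∈ Bad)),
          |u (κ + Finsupp.single l 1) J| ≤ ((d-1:ℕ):ℝ) * Bn := by
        refine le_trans (Finset.sum_le_sum hterm) ?_
        rw [Finset.sum_const, nsmul_eq_mul]
        refine mul_le_mul_of_nonneg_right ?_ hBn0
        have hc : ((nhat - κ).support.filter (fun k => k ∈ Bad)).card ≤ d - 1 := by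
          refine le_trans (Finset.card_le_card ?_) hnhat_supp_card
          refine subset_trans (Finset.filter_subset _ _) ?_
          intro x hx
          rw [Finsupp.mem_support_iff] at hx ⊢
          rw [Finsupp.tsub_apply] at hx
          omega
        exact_mod_cast hc
      linarith
    -- apply inversion
    have hrF : 2*r + 1 ≤ F.card := by omega
    have hinv := inversion F r hrF (fun I => u κ I)
    have hJ0mem : J0 ∈ F.powersetCard r := Finset.mem_powersetCard.2 ⟨hJ0F, hJ0c⟩
    have hsq : (u κ J0)^2 ≤ ∑ I ∈ F.powersetCard r, (u κ I)^2 :=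
      Finset.single_le_sum (f := fun I => (u κ I)^2) (fun I _ => sq_nonneg _) hJ0mem
    have hRHS : ∑ J ∈ F.powersetCard (r+1), (∑ j ∈ J, u κ (J.erase j))^2
        ≤ (((F.powersetCard (r+1)).card : ℕ) : ℝ) * ρ^2 := by
      rw [← nsmul_eq_mul, ← Finset.sum_const]
      refine Finset.sum_le_sum ?_
      intro J hJ
      rw [← sq_abs]
      exact pow_le_pow_left₀ (abs_nonneg _) (hUbound J hJ) 2
    have hchoose : (((F.powersetCard (r+1)).card : ℕ) : ℝ) ≤ (((T^q : ℕ)^2 : ℕ) : ℝ) := by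
      have h1 : (F.powersetCard (r+1)).card = Nat.choose F.card (r+1) := Finset.card_powersetCard _ _
      have h2 : Nat.choose F.card (r+1) ≤ F.card^(r+1) := Nat.choose_le_pow _ _
      have h3 : F.card^(r+1) ≤ T^(r+1) := Nat.pow_le_pow_left hFT _
      have h4 : T^(r+1) ≤ T^(2*q) := by
        refine Nat.pow_le_pow_right (by omega) ?_
        omega
      have h5 : T^(2*q) = (T^q)^2 := by rw [← pow_mul, Nat.mul_comm]
      have : (F.powersetCard (r+1)).card ≤ (T^q)^2 := by omega
      exact_mod_cast this
    have hfin : (u κ J0)^2 ≤ (((T^q:ℕ):ℝ) * ρ)^2 := by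
      have h6 : (((T^q : ℕ)^2 : ℕ) : ℝ) = (((T^q:ℕ):ℝ))^2 := by push_cast; ring
      calc (u κ J0)^2 ≤ ∑ I ∈ F.powersetCard r, (u κ I)^2 := hsq
      _ ≤ ∑ J ∈ F.powersetCard (r+1), (∑ j ∈ J, u κ (J.erase j))^2 := hinv
      _ ≤ (((F.powersetCard (r+1)).card : ℕ) : ℝ) * ρ^2 := hRHS
      _ ≤ (((T^q : ℕ)^2 : ℕ) : ℝ) * ρ^2 := by
          refine mul_le_mul_of_nonneg_right hchoose (sq_nonneg _)
      _ = (((T^q:ℕ):ℝ) * ρ)^2 := by rw [h6]; ring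
    have hTq0 : (0:ℝ) ≤ ((T^q:ℕ):ℝ) := by positivity
    have hsqrt := Real.sqrt_le_sqrt (le_of_lt (lt_of_le_of_lt hfin (lt_add_one _)))
    have hsqrt2 := Real.sqrt_le_sqrt hfin
    rw [Real.sqrt_sq_eq_abs, Real.sqrt_sq (by positivity : (0:ℝ) ≤ ((T^q:ℕ):ℝ) * ρ)] at hsqrt2
    exact hsqrt2
  -- combination arithmetic
  have hcomb : ∀ t : ℕ, ((T^q : ℕ) : ℝ) * (τ + ((d-1:ℕ):ℝ)*(η*M) + ((d-1:ℕ):ℝ)*(A^t*(τ + η*M)))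
      ≤ A^(t+1) * (τ + η*M) := by
    intro t
    have hAt1 : (1:ℝ) ≤ A^t := one_le_pow₀ hA1
    have hdm1 : ((d-1:ℕ):ℝ) + 1 = d := by
      have : (d-1) + 1 = d := by omega
      exact_mod_cast this
    have hTq1 : (1:ℝ) ≤ ((T^q:ℕ):ℝ) := by
      have : 0 < T^q := Nat.pow_pos (by omega)
      exact_mod_cast this
    have hAeq : A = 2*((d:ℝ)+1) * ((T^q:ℕ):ℝ) := by
      rw [hA, hAnat]
      push_cast
      ring
    have hc0 : (0:ℝ) ≤ ((d-1:ℕ):ℝ) := Nat.cast_nonneg _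
    have hcd : ((d-1:ℕ):ℝ) ≤ (d:ℝ)+1 := by
      have h : (d-1:ℕ) ≤ d+1 := by omega
      calc ((d-1:ℕ):ℝ) ≤ ((d+1:ℕ):ℝ) := by exact_mod_cast h
      _ = (d:ℝ)+1 := by push_cast; ring
    have p1 : τ ≤ A^t*τ := by
      calc τ = 1*τ := (one_mul τ).symm
      _ ≤ A^t*τ := mul_le_mul_of_nonneg_right hAt1 hτ0
    have p2 : ((d-1:ℕ):ℝ)*(η*M) ≤ ((d-1:ℕ):ℝ)*(A^t*(η*M)) := by
      refine mul_le_mul_of_nonneg_left ?_ hc0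
      calc η*M = 1*(η*M) := (one_mul _).symm
      _ ≤ A^t*(η*M) := mul_le_mul_of_nonneg_right hAt1 hηM0
    have p3 : A^t*τ ≤ ((d:ℝ)+1)*(A^t*τ) := by
      refine le_mul_of_one_le_left (by positivity) ?_
      have : (1:ℝ) ≤ (d:ℝ) := by exact_mod_cast hd
      linarith
    have p4 : ((d-1:ℕ):ℝ)*(A^t*(η*M)) ≤ ((d:ℝ)+1)*(A^t*(η*M)) :=
      mul_le_mul_of_nonneg_right hcd (by positivity)
    have expand1 : ((d:ℝ)+1)*(A^t*(τ+η*M)) = ((d:ℝ)+1)*(A^t*τ) + ((d:ℝ)+1)*(A^t*(η*M)) := by ring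
    have h1 : τ + ((d-1:ℕ):ℝ)*(η*M) ≤ ((d:ℝ)+1) * (A^t*(τ + η*M)) := by
      rw [expand1]; linarith
    have h2 : ((d-1:ℕ):ℝ)*(A^t*(τ + η*M)) ≤ ((d:ℝ)+1)*(A^t*(τ+η*M)) :=
      mul_le_mul_of_nonneg_right hcd (by positivity)
    have hgoal : τ + ((d-1:ℕ):ℝ)*(η*M) + ((d-1:ℕ):ℝ)*(A^t*(τ + η*M))
        ≤ 2*((d:ℝ)+1)*(A^t*(τ+η*M)) := by linarith
    calc ((T^q : ℕ) : ℝ) * (τ + ((d-1:ℕ):ℝ)*(η*M) + ((d-1:ℕ):ℝ)*(A^t*(τ + η*M)))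
        ≤ ((T^q : ℕ) : ℝ) * (2*((d:ℝ)+1)*(A^t*(τ+η*M))) := by
          refine mul_le_mul_of_nonneg_left hgoal (by positivity)
    _ = A^(t+1) * (τ + η*M) := by
          rw [pow_succ, hAeq]
          ring
  -- the induction
  have IND : ∀ t : ℕ, t ≤ bst → ∀ (κ : Fin T →₀ ℕ), κ ≤ nhat → κ.support ⊆ Bad →
      (κ.sum fun _ e => e) = bst - t →
      ∀ J ⊆ F, J.card = bst - t →
      |u κ J| ≤ A^(t+1) * (τ + η*M) := by
    intro t
    induction t with
    | zero =>
      intro _ κ hκn hκB hκsum J hJF hJc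
      have hvac : ∀ (κ' : Fin T →₀ ℕ), κ' ≤ nhat → κ'.support ⊆ Bad →
          (κ'.sum fun _ e => e) = bst + 1 →
          ∀ J' ⊆ F, J'.card = bst + 1 → |u κ' J'| ≤ (τ + η*M) := by
        intro κ' hκ'n hκ'B hκ'sum J' _ _
        exfalso
        have h1 : ∑ k ∈ Bad, κ' k = bst + 1 := by rw [hsumBad κ' hκ'B, hκ'sum]
        have h2 : ∑ k ∈ Bad, κ' k ≤ ∑ k ∈ Bad, nhat k :=
          Finset.sum_le_sum (fun k _ => hκpt κ' hκ'n k)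
        have h3 : ∑ k ∈ Bad, nhat k = bst := hnhat_bc
        omega
      have hstep := KEYSTEP bst le_rfl (τ + η*M) (by positivity) hvac κ hκn hκB
        (by simpa using hκsum) J hJF (by simpa using hJc)
      refine le_trans hstep ?_
      have := hcomb 0
      simpa using this
    | succ t ih =>
      intro ht κ hκn hκB hκsum J hJF hJc
      have hnext : ∀ (κ' : Fin T →₀ ℕ), κ' ≤ nhat → κ'.support ⊆ Bad →
          (κ'.sum fun _ e => e) = (bst - (t+1)) + 1 →
          ∀ J' ⊆ F, J'.card = (bst - (t+1)) + 1 → |u κ' J'| ≤ A^(t+1) * (τ + η*M) := by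
        intro κ' hκ'n hκ'B hκ'sum J' hJ'F hJ'c
        have he : (bst - (t+1)) + 1 = bst - t := by omega
        exact ih (by omega) κ' hκ'n hκ'B (by rw [hκ'sum, he]) J' hJ'F (by rw [hJ'c, he])
      have hstep := KEYSTEP (bst - (t+1)) (by omega) (A^(t+1) * (τ + η*M)) (by positivity)
        hnext κ hκn hκB hκsum J hJF hJc
      exact le_trans hstep (hcomb (t+1))
  -- conclude
  have hu0 : u 0 ∅ = S.coeff nhat := by
    rw [hu]
    simp only []
    congr 1
    have h1 : oneJ ∅ = 0 := by rw [honeJ]; simp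
    rw [h1, tsub_zero, add_zero]
  have hM_le : M ≤ A^(bst+1) * (τ + η*M) := by
    have := IND bst le_rfl 0 (by intro x; simp) (by simp) (by simp) ∅ (Finset.empty_subset _)
      (by simp)
    rw [hu0] at this
    rw [hM]
    exact this
  have hAbst : A^(bst+1) ≤ A^d := pow_le_pow_right₀ hA1 (by omega)
  have hM_le2 : M ≤ A^d * (τ + η*M) := by
    refine le_trans hM_le (mul_le_mul_of_nonneg_right hAbst ?_)
    positivity
  have hAd0 : (0:ℝ) < A^d := by positivity
  have hηAd : A^d * η = 1/2 := by
    rw [hη]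
    field_simp
  have hM_le3 : M ≤ 2 * A^d * τ := by
    have h1 : A^d * (τ + η*M) = A^d * τ + (A^d * η) * M := by ring
    rw [h1, hηAd] at hM_le2
    linarith
  have hsstar_le : sstar ≤ (2*A^d)^d * τ := by
    have h1 : sstar ≤ M * (2*A^d)^bst := by
      have h2 : η^bst = ((2*A^d)^bst)⁻¹ := by
        rw [hη]
        rw [one_div, ← inv_pow]
      have h3 : (0:ℝ) < (2*A^d)^bst := by positivity
      rw [h2] at hMs
      calc sstar = sstar * ((2*A^d)^bst)⁻¹ * (2*A^d)^bst := by field_simp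
      _ ≤ M * (2*A^d)^bst := by
          refine mul_le_mul_of_nonneg_right hMs (le_of_lt h3)
    have h4 : M * (2*A^d)^bst ≤ (2*A^d*τ) * (2*A^d)^bst := by
      refine mul_le_mul_of_nonneg_right hM_le3 (by positivity)
    have h5 : (2*A^d*τ) * (2*A^d)^bst = (2*A^d)^(bst+1) * τ := by
      rw [pow_succ]
      ring
    have h6 : (2*A^d)^(bst+1) * τ ≤ (2*A^d)^d * τ := by
      refine mul_le_mul_of_nonneg_right ?_ hτ0
      refine pow_le_pow_right₀ ?_ (by omega)
      linarith
    linarith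
  intro n
  have hcast : (((2*(2*(d+1)*T^((d+1)/2))^d)^d : ℕ) : ℝ) = (2*A^d)^d := by
    rw [hA, hAnat, hq]
    push_cast
    ring
  rw [hcast]
  by_cases hn : n ∈ S.support
  · exact le_trans (hnstar_max n hn) hsstar_le
  · have : S.coeff n = 0 := by simpa [MvPolynomial.mem_support_iff] using hn
    rw [this, abs_zero]
    positivity


lemma linearPart_coeff {T : ℕ} (Q : MvPolynomial (Fin T) ℝ) (j : Fin T) (m : Fin T →₀ ℕ)
    (hm : m j = 1) :
    (linearPart Q j).coeff (m - Finsupp.single j 1) = Q.coeff m := by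
  classical
  have hrec : ∀ m' : Fin T →₀ ℕ, m' j = 1 → (m' - Finsupp.single j 1) + Finsupp.single j 1 = m' := by
    intro m' hm'
    ext x
    rw [Finsupp.add_apply, Finsupp.tsub_apply, Finsupp.single_apply]
    by_cases hx : j = x
    · subst hx
      simp only [if_true, eq_self_iff_true]
      omega
    · simp [hx]
  unfold linearPart
  rw [coeff_sum]
  simp_rw [coeff_monomial]
  by_cases hsupp : m ∈ Q.support
  · rw [Finset.sum_eq_single_of_mem m (Finset.mem_filter.2 ⟨hsupp, hm⟩)]
    · simp
    · intro b hb hbm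
      rw [Finset.mem_filter] at hb
      rw [if_neg]
      intro h
      apply hbm
      have := congrArg (fun z => z + Finsupp.single j 1) h
      simpa [hrec b hb.2, hrec m hm] using this
  · have hc0 : Q.coeff m = 0 := by simpa [MvPolynomial.mem_support_iff] using hsupp
    rw [hc0]
    refine Finset.sum_eq_zero ?_
    intro b hb
    rw [Finset.mem_filter] at hb
    rw [if_neg]
    intro h
    have hbm : b = m := by
      have := congrArg (fun z => z + Finsupp.single j 1) h
      simpa [hrec b hb.2, hrec m hm] using this
    exact hsupp (hbm ▸ hb.1)

lemma coeffNormSq_pos {σ : Type*} {P : MvPolynomial σ ℝ} (hP : P ≠ 0) : 0 < coeffNormSq P := by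
  classical
  obtain ⟨m, hm⟩ := Finset.nonempty_iff_ne_empty.2 (fun h => hP (MvPolynomial.support_eq_empty.1 h))
  have h1 : P.coeff m ≠ 0 := MvPolynomial.mem_support_iff.1 hm
  have h2 : 0 < (P.coeff m)^2 := by positivity
  exact lt_of_lt_of_le h2 (sq_coeff_le_coeffNormSq P m)

theorem stmt14 (d : ℕ) (hd : 1 ≤ d) (T : ℕ) (hT : T = 10 * d)
    (S : MvPolynomial (Fin T) ℝ) (hS : S.totalDegree ≤ d - 1)
    (Q : MvPolynomial (Fin T) ℝ)
    (hQ : Q = C (1 / Real.sqrt T) * (∑ j : Fin T, X j) * S) :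
    (T : ℝ) / 2 ≤
      ((Finset.univ.filter (fun j : Fin T =>
        (1 / (T : ℝ)) * ((20 * d * T : ℝ) ^ (4 ^ d))⁻¹ * coeffNormSq Q
          ≤ coeffNormSq (linearPart Q j))).card : ℝ) := by
  classical
  by_cases hQ0 : Q = 0
  · have hall : (Finset.univ.filter (fun j : Fin T =>
        (1 / (T : ℝ)) * ((20 * d * T : ℝ) ^ (4 ^ d))⁻¹ * coeffNormSq Q
          ≤ coeffNormSq (linearPart Q j))) = Finset.univ := by
      refine Finset.filter_true_of_mem ?_
      intro j _
      have h1 : coeffNormSq Q = 0 := by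
        rw [hQ0]
        unfold coeffNormSq
        simp
      rw [h1, mul_zero]
      exact coeffNormSq_nonneg _
    rw [hall, Finset.card_univ, Fintype.card_fin]
    have hT2 : (0:ℝ) ≤ (T:ℝ) := Nat.cast_nonneg _
    linarith
  · by_contra hcount
    push_neg at hcount
    have hT0 : 0 < T := by omega
    have hTR : (0:ℝ) < (T:ℝ) := by exact_mod_cast hT0
    have hsT : (0:ℝ) < Real.sqrt T := Real.sqrt_pos.2 hTR
    have hSne : S ≠ 0 := by
      intro h
      apply hQ0
      rw [hQ, h, mul_zero]
    -- bad set
    set Bad : Finset (Fin T) := Finset.univ.filter (fun j : Fin T =>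
      ¬ ((1 / (T : ℝ)) * ((20 * d * T : ℝ) ^ (4 ^ d))⁻¹ * coeffNormSq Q
          ≤ coeffNormSq (linearPart Q j))) with hBadDef
    have hBadCard : 5*d + 1 ≤ Bad.card := by
      have hsplit := Finset.card_filter_add_card_filter_not
        (s := (Finset.univ : Finset (Fin T))) (p := fun j : Fin T =>
        (1 / (T : ℝ)) * ((20 * d * T : ℝ) ^ (4 ^ d))⁻¹ * coeffNormSq Q
          ≤ coeffNormSq (linearPart Q j))
      rw [Finset.card_univ, Fintype.card_fin] at hsplit
      have h2 : 2 * (Finset.univ.filter (fun j : Fin T =>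
          (1 / (T : ℝ)) * ((20 * d * T : ℝ) ^ (4 ^ d))⁻¹ * coeffNormSq Q
            ≤ coeffNormSq (linearPart Q j))).card < T := by
        have := hcount
        have h3 : (2 * (Finset.univ.filter (fun j : Fin T =>
            (1 / (T : ℝ)) * ((20 * d * T : ℝ) ^ (4 ^ d))⁻¹ * coeffNormSq Q
              ≤ coeffNormSq (linearPart Q j))).card : ℝ) < T := by linarith
        exact_mod_cast h3
      rw [hBadDef]
      omega
    have hBadmem : ∀ j ∈ Bad, coeffNormSq (linearPart Q j)
        < (1 / (T : ℝ)) * ((20 * d * T : ℝ) ^ (4 ^ d))⁻¹ * coeffNormSq Q := by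
      intro j hj
      rw [hBadDef, Finset.mem_filter] at hj
      exact lt_of_not_ge hj.2
    -- Qt and scaling
    set Qt : MvPolynomial (Fin T) ℝ := (∑ j : Fin T, X j) * S with hQt
    have hQeq : Q = C (1 / Real.sqrt T) * Qt := by rw [hQ, hQt, mul_assoc]
    have hc2 : (1 / Real.sqrt T)^2 = 1/(T:ℝ) := by
      rw [div_pow, one_pow, Real.sq_sqrt (le_of_lt hTR)]
    have hQns : coeffNormSq Q = 1/(T:ℝ) * coeffNormSq Qt := by
      rw [hQeq, coeffNormSq_C_mul, hc2]
    have hQcoeff : ∀ m, Qt.coeff m = Real.sqrt T * Q.coeff m := by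
      intro m
      rw [hQeq, MvPolynomial.coeff_C_mul]
      field_simp
    -- τ
    set τ : ℝ := Real.sqrt ((T:ℝ) * ((1 / (T : ℝ)) * ((20 * d * T : ℝ) ^ (4 ^ d))⁻¹ * coeffNormSq Q)) with hτdef
    have hthr0 : (0:ℝ) ≤ (T:ℝ) * ((1 / (T : ℝ)) * ((20 * d * T : ℝ) ^ (4 ^ d))⁻¹ * coeffNormSq Q) := by
      have h1 := coeffNormSq_nonneg Q
      have h2 : (0:ℝ) ≤ ((20 * d * T : ℝ) ^ (4 ^ d))⁻¹ := by positivity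
      positivity
    have hτ0 : 0 ≤ τ := Real.sqrt_nonneg _
    have hτsq : τ^2 = (T:ℝ) * ((1 / (T : ℝ)) * ((20 * d * T : ℝ) ^ (4 ^ d))⁻¹ * coeffNormSq Q) :=
      Real.sq_sqrt hthr0
    have hτm : ∀ m : Fin T →₀ ℕ, (∃ j ∈ Bad, m j = 1) → |Qt.coeff m| ≤ τ := by
      intro m ⟨j, hjB, hmj⟩
      have h1 : (Q.coeff m)^2 ≤ coeffNormSq (linearPart Q j) := by
        rw [← linearPart_coeff Q j m hmj]
        exact sq_coeff_le_coeffNormSq _ _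
      have h2 := hBadmem j hjB
      have h3 : (Qt.coeff m)^2 = (T:ℝ) * (Q.coeff m)^2 := by
        rw [hQcoeff m, mul_pow, Real.sq_sqrt (le_of_lt hTR)]
      have h4 : (Qt.coeff m)^2 ≤ τ^2 := by
        rw [h3, hτsq]
        have := mul_le_mul_of_nonneg_left (le_of_lt (lt_of_le_of_lt h1 h2)) (le_of_lt hTR)
        linarith
      have h5 := Real.sqrt_le_sqrt h4
      rwa [Real.sqrt_sq_eq_abs, Real.sqrt_sq hτ0] at h5
    -- apply core
    have hcoeff := core d T hd hT S hS hSne Bad hBadCard τ hτ0 (by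
      intro m hm
      exact hτm m hm)
    set Cn : ℕ := (2*(2*(d+1)*T^((d+1)/2))^d)^d with hCn
    -- degree of Qt
    have htdQt : Qt.totalDegree ≤ d := by
      rw [hQt]
      refine le_trans (MvPolynomial.totalDegree_mul _ _) ?_
      have h1 : (∑ j : Fin T, X j : MvPolynomial (Fin T) ℝ).totalDegree ≤ 1 := by
        refine le_trans (MvPolynomial.totalDegree_finset_sum _ _) ?_
        refine Finset.sup_le ?_
        intro j _
        rw [MvPolynomial.totalDegree_X]
      have h2 := hS
      omega
    -- coefficient bound for Qt
    have hQtcoeff : ∀ m ∈ Qt.support, |Qt.coeff m| ≤ (d:ℝ) * ((Cn:ℝ) * τ) := by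
      intro m hm
      have h1 : m.support.card ≤ d :=
        le_trans (card_support_le_sum m) (le_trans (MvPolynomial.le_totalDegree hm) htdQt)
      rw [hQt, coeff_ellmul]
      refine le_trans (Finset.abs_sum_le_sum_abs _ _) ?_
      have h2 : ∀ l ∈ m.support, |S.coeff (m - Finsupp.single l 1)| ≤ (Cn:ℝ) * τ := by
        intro l _
        exact hcoeff _
      refine le_trans (Finset.sum_le_sum h2) ?_
      rw [Finset.sum_const, nsmul_eq_mul]
      refine mul_le_mul_of_nonneg_right ?_ (by positivity)
      exact_mod_cast h1
    -- support card of Qt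
    have hQtsupp : Qt.support.card ≤ T * S.support.card := by
      rw [hQt]
      refine le_trans (Finset.card_le_card (MvPolynomial.support_mul _ _)) ?_
      refine le_trans Finset.card_add_le ?_
      have hl : (∑ j : Fin T, X j : MvPolynomial (Fin T) ℝ).support.card ≤ T := by
        have h1 : (∑ j : Fin T, X j : MvPolynomial (Fin T) ℝ).support
            ⊆ Finset.univ.biUnion (fun j => (X j : MvPolynomial (Fin T) ℝ).support) :=
          MvPolynomial.support_sum
        refine le_trans (Finset.card_le_card h1) ?_
        refine le_trans (Finset.card_biUnion_le) ?_
        have h2 : ∀ j : Fin T, (X j : MvPolynomial (Fin T) ℝ).support.card = 1 := by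
          intro j
          rw [MvPolynomial.support_X]
          simp
        calc ∑ j : Fin T, (X j : MvPolynomial (Fin T) ℝ).support.card = ∑ _j : Fin T, 1 :=
              Finset.sum_congr rfl (fun j _ => h2 j)
        _ ≤ T := by simp
      exact Nat.mul_le_mul_right _ hl
    -- norm bound
    have hnormQt : coeffNormSq Qt ≤ ((T * S.support.card : ℕ):ℝ) * ((d:ℝ) * ((Cn:ℝ) * τ))^2 := by
      unfold coeffNormSq
      have h1 : ∀ m ∈ Qt.support, (Qt.coeff m)^2 ≤ ((d:ℝ) * ((Cn:ℝ) * τ))^2 := by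
        intro m hm
        rw [← sq_abs]
        exact pow_le_pow_left₀ (abs_nonneg _) (hQtcoeff m hm) 2
      refine le_trans (Finset.sum_le_sum h1) ?_
      rw [Finset.sum_const, nsmul_eq_mul]
      refine mul_le_mul_of_nonneg_right ?_ (sq_nonneg _)
      exact_mod_cast hQtsupp
    -- final contradiction
    have hQpos : 0 < coeffNormSq Q := coeffNormSq_pos hQ0
    have hNB : S.support.card ≤ d^(10*d) := by
      have h := support_card_le S hS
      have h1 : (d-1)+1 = d := by omega
      rw [h1] at h
      rw [← hT]
      exact h
    have hKpos : (0:ℝ) < (20 * d * T : ℝ) ^ (4 ^ d) := by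
      have : (0:ℝ) < (20 * d * T : ℝ) := by
        have : (0:ℝ) < (d:ℝ) := by exact_mod_cast hd
        nlinarith
      positivity
    -- τ² = inv * normQ ; normQt = T normQ
    have hτsq2 : τ^2 = ((20 * d * T : ℝ) ^ (4 ^ d))⁻¹ * coeffNormSq Q := by
      rw [hτsq]
      field_simp
    have hQtnorm : coeffNormSq Qt = (T:ℝ) * coeffNormSq Q := by
      rw [hQns]
      field_simp
    have hchain : (T:ℝ) * coeffNormSq Q
        ≤ ((T * S.support.card : ℕ):ℝ) * ((d:ℝ)^2 * (Cn:ℝ)^2 * (((20 * d * T : ℝ) ^ (4 ^ d))⁻¹ * coeffNormSq Q)) := by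
      rw [← hτsq2]
      calc (T:ℝ) * coeffNormSq Q = coeffNormSq Qt := hQtnorm.symm
      _ ≤ ((T * S.support.card : ℕ):ℝ) * ((d:ℝ) * ((Cn:ℝ) * τ))^2 := hnormQt
      _ = ((T * S.support.card : ℕ):ℝ) * ((d:ℝ)^2 * (Cn:ℝ)^2 * τ^2) := by ring
    have hmain : (20 * d * T : ℝ) ^ (4 ^ d) ≤ ((S.support.card:ℕ):ℝ) * ((d:ℝ)^2 * (Cn:ℝ)^2) := by
      have h1 : ((T * S.support.card : ℕ):ℝ) = (T:ℝ) * ((S.support.card:ℕ):ℝ) := by push_cast; ring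
      rw [h1] at hchain
      have h2 : (T:ℝ) * coeffNormSq Q * ((20 * d * T : ℝ) ^ (4 ^ d))
          ≤ (T:ℝ) * (((S.support.card:ℕ):ℝ) * ((d:ℝ)^2 * (Cn:ℝ)^2)) * coeffNormSq Q := by
        have h3 := mul_le_mul_of_nonneg_right hchain (le_of_lt hKpos)
        calc (T:ℝ) * coeffNormSq Q * ((20 * d * T : ℝ) ^ (4 ^ d))
            ≤ ((T:ℝ) * ((S.support.card:ℕ):ℝ)) * ((d:ℝ)^2 * (Cn:ℝ)^2 * (((20 * d * T : ℝ) ^ (4 ^ d))⁻¹ * coeffNormSq Q)) * ((20 * d * T : ℝ) ^ (4 ^ d)) := h3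
        _ = (T:ℝ) * (((S.support.card:ℕ):ℝ) * ((d:ℝ)^2 * (Cn:ℝ)^2)) * coeffNormSq Q
              * (((20 * d * T : ℝ) ^ (4 ^ d))⁻¹ * ((20 * d * T : ℝ) ^ (4 ^ d))) := by ring
        _ = (T:ℝ) * (((S.support.card:ℕ):ℝ) * ((d:ℝ)^2 * (Cn:ℝ)^2)) * coeffNormSq Q := by
              rw [inv_mul_cancel₀ (ne_of_gt hKpos), mul_one]
      have h4 : (0:ℝ) < (T:ℝ) * coeffNormSq Q := by positivity
      nlinarith [h4, hKpos]
    -- convert to ℕ and contradict arith_main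
    have hKnat : (20 * d * T : ℝ) = ((200 * d^2 : ℕ):ℝ) := by
      rw [hT]; push_cast; ring
    have hfinal : ((200 * d^2 : ℕ):ℝ)^(4^d) ≤ ((d^(10*d) * ((d:ℕ))^2 * (Cn)^2 : ℕ):ℝ) := by
      rw [← hKnat]
      refine le_trans hmain ?_
      push_cast
      have h5 : ((S.support.card:ℕ):ℝ) ≤ ((d^(10*d):ℕ):ℝ) := by exact_mod_cast hNB
      have h6 : (0:ℝ) ≤ (d:ℝ)^2 * (Cn:ℝ)^2 := by positivity
      calc ((S.support.card:ℕ):ℝ) * ((d:ℝ)^2 * (Cn:ℝ)^2)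
          ≤ ((d^(10*d):ℕ):ℝ) * ((d:ℝ)^2 * (Cn:ℝ)^2) := mul_le_mul_of_nonneg_right h5 h6
      _ = ((d:ℝ)^(10*d) * (d:ℝ)^2 * (Cn:ℝ)^2) := by push_cast; ring
    have hfinalnat : (200 * d^2)^(4^d) ≤ d^(10*d) * d^2 * Cn^2 := by
      have := hfinal
      rw [show (((200 * d^2 : ℕ):ℝ)^(4^d)) = (((200 * d^2)^(4^d) : ℕ):ℝ) by push_cast; ring] at this
      exact_mod_cast this
    have harith := arith_main d hd
    have hpow : ((2*(2*(d+1)*(10*d)^((d+1)/2))^d)^d)^2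
        = (2*(2*(d+1)*(10*d)^((d+1)/2))^d)^(2*d) := by
      ring
    rw [hCn, hT] at hfinalnat
    rw [hpow] at hfinalnat
    have hre : d^(10*d) * d^2 * (2*(2*(d+1)*(10*d)^((d+1)/2))^d)^(2*d)
        = (2*(2*(d+1)*(10*d)^((d+1)/2))^d)^(2*d) * d^(10*d) * d^2 := by ring
    rw [hre] at hfinalnat
    exact Nat.lt_irrefl _ (lt_of_le_of_lt hfinalnat harith)
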